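/- arXiv:2208.13041 — 2 statements merged into one kernel-verified Lean document; each statement's English description precedes it below -/
import Mathlib

section
/- Let (X, μ, F) be a measure-preserving dynamical system on a probability space, and let V ⊆ X be measurable. Define Z(V) = {p ∈ X : liminf_{N→∞} (1/N) Σ_{k=0}^{N} 1_V(F^k p) = 0} and P(V) = ⋃_{k≥0} F^{-k}(V). Then μ(P(V) ∩ Z(V)) = 0. -/
open MeasureTheory Filter

/-- Garsia's maximal ergodic lemma. -/
theorem maximal_erg {X : Type*} [MeasurableSpace X] (μ : Measure X) [IsProbabilityMeasure μ]
    (F : X → X) (hF : MeasurePreserving F μ μ) (g : X → ℝ) (hg : Measurable g)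
    (c : ℝ) (hc : 0 ≤ c) (hgb : ∀ x, |g x| ≤ c) :
    0 ≤ ∫ x in {p : X | ∃ n : ℕ, 0 < ∑ k ∈ Finset.range (n + 1), g (F^[k] p)}, g x ∂μ := by
  set S : ℕ → X → ℝ := fun n p => ∑ k ∈ Finset.range n, g (F^[k] p) with hS
  have hSmeas : ∀ n, Measurable (S n) := fun n =>
    Finset.measurable_sum _ fun k _ => hg.comp (hF.measurable.iterate k)
  have hSrec : ∀ n p, S (n + 1) p = g p + S n (F p) := by
    intro n p
    simp only [hS, Finset.sum_range_succ', Function.iterate_succ_apply,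
      Function.iterate_zero_apply]
    exact add_comm _ _
  -- the maximal functions
  let M : ℕ → X → ℝ := fun n => Nat.rec (fun _ => 0) (fun n Mn p => max (Mn p) (S (n + 1) p)) n
  have hM0 : ∀ p, M 0 p = 0 := fun p => rfl
  have hMsucc : ∀ n p, M (n + 1) p = max (M n p) (S (n + 1) p) := fun n p => rfl
  have hMnonneg : ∀ n p, 0 ≤ M n p := by
    intro n p; induction n with
    | zero => simp [hM0]
    | succ n ih => rw [hMsucc]; exact le_max_of_le_left ih
  have hMmono : ∀ n p, M n p ≤ M (n + 1) p := fun n p => le_max_left _ _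
  have hMmeas : ∀ n, Measurable (M n) := by
    intro n; induction n with
    | zero => exact measurable_const
    | succ n ih => exact ih.max (hSmeas (n + 1))
  have hSb : ∀ n p, |S n p| ≤ n * c := by
    intro n p
    calc |S n p| ≤ ∑ k ∈ Finset.range n, |g (F^[k] p)| := Finset.abs_sum_le_sum_abs _ _
    _ ≤ ∑ k ∈ Finset.range n, c := Finset.sum_le_sum fun k _ => hgb _
    _ = n * c := by simp [mul_comm]
  have hMb : ∀ n p, |M n p| ≤ (n + 1) * c := by
    intro n p
    rw [abs_of_nonneg (hMnonneg n p)]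
    induction n with
    | zero => simpa [hM0] using hc
    | succ n ih =>
      rw [hMsucc]
      refine max_le (ih.trans ?_) ((le_abs_self _).trans ((hSb (n+1) p).trans ?_)) <;>
        push_cast <;> nlinarith
  -- key inequality
  have hkey : ∀ n p, M (n + 1) p ≤ max 0 (g p + M n (F p)) := by
    intro n p
    induction n with
    | zero =>
      rw [hMsucc, hM0]
      refine max_le (le_max_left _ _) ?_
      rw [hSrec]
      simp only [hM0]
      refine le_max_of_le_right ?_
      simp [hS]
    | succ n ih =>
      rw [hMsucc]
      refine max_le (ih.trans (max_le_max le_rfl (by linarith [hMmono n (F p)]))) ?_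
      rw [hSrec]
      refine le_max_of_le_right (by linarith [le_max_right (M n (F p)) (S (n + 1) (F p))])
  -- integrability
  have integrable_of_bound : ∀ (f : X → ℝ) (b : ℝ), Measurable f → (∀ x, |f x| ≤ b) →
      Integrable f μ := by
    intro f b hf hb
    exact (integrable_const b).mono' hf.aestronglyMeasurable
      (ae_of_all _ fun x => by simpa [Real.norm_eq_abs] using hb x)
  have hgint : Integrable g μ := integrable_of_bound g c hg hgb
  have hMint : ∀ n, Integrable (M n) μ := fun n =>
    integrable_of_bound (M n) ((n + 1) * c) (hMmeas n) (hMb n)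
  have hMFint : ∀ n, Integrable (fun p => M n (F p)) μ := fun n =>
    integrable_of_bound _ ((n + 1) * c) ((hMmeas n).comp hF.measurable)
      (fun x => hMb n (F x))
  -- the sets
  set E : ℕ → Set X := fun n => {p | 0 < M (n + 1) p} with hE
  have hEmeas : ∀ n, MeasurableSet (E n) := fun n =>
    measurableSet_lt measurable_const (hMmeas (n + 1))
  have hEmono : Monotone E :=
    monotone_nat_of_le_succ fun n p hp =>
      show 0 < M (n + 1 + 1) p from lt_of_lt_of_le hp (hMmono (n + 1) p)
  -- integral inequality for each n
  have hstep : ∀ n, 0 ≤ ∫ x in E n, g x ∂μ := by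
    intro n
    have h1 : ∀ p ∈ E n, M (n + 1) p - M (n + 1) (F p) ≤ g p := by
      intro p hp
      have := hkey n p
      rw [max_eq_right] at this
      · have h2 := hMmono n (F p)
        linarith
      · by_contra hcon
        push_neg at hcon
        have := (hkey n p).trans (max_le le_rfl hcon.le)
        exact absurd hp (by simpa [hE] using not_lt.2 this)
    have hMeq : ∫ x in E n, M (n + 1) x ∂μ = ∫ x, M (n + 1) x ∂μ := by
      refine setIntegral_eq_integral_of_forall_compl_eq_zero fun x hx => ?_
      have : ¬ 0 < M (n + 1) x := hx
      linarith [hMnonneg (n + 1) x]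
    have hMF : ∫ x in E n, M (n + 1) (F x) ∂μ ≤ ∫ x, M (n + 1) (F x) ∂μ :=
      setIntegral_le_integral (hMFint (n + 1)) (ae_of_all _ fun x => by simpa using hMnonneg (n + 1) (F x))
    have hcomp : ∫ x, M (n + 1) (F x) ∂μ = ∫ x, M (n + 1) x ∂μ := by
      rw [← hF.map_eq, integral_map hF.measurable.aemeasurable
        ((hMmeas (n + 1)).aestronglyMeasurable), hF.map_eq]
    calc (0:ℝ) = ∫ x, M (n + 1) x ∂μ - ∫ x, M (n + 1) (F x) ∂μ := by rw [hcomp]; ring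
    _ ≤ ∫ x in E n, M (n + 1) x ∂μ - ∫ x in E n, M (n + 1) (F x) ∂μ := by
        rw [hMeq]; linarith
    _ = ∫ x in E n, (M (n + 1) x - M (n + 1) (F x)) ∂μ := by
        rw [integral_sub ((hMint (n+1)).integrableOn) ((hMFint (n+1)).integrableOn)]
    _ ≤ ∫ x in E n, g x ∂μ := by
        refine setIntegral_mono_on
          (((hMint (n+1)).integrableOn).sub ((hMFint (n+1)).integrableOn))
          hgint.integrableOn (hEmeas n) h1
  -- union of the sets
  have hunion : (⋃ n, E n) = {p : X | ∃ n : ℕ, 0 < ∑ k ∈ Finset.range (n + 1), g (F^[k] p)} := by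
    ext p
    simp only [Set.mem_iUnion, Set.mem_setOf_eq, hE]
    constructor
    · rintro ⟨n, hn⟩
      -- 0 < M (n+1) p implies some S (k+1) p > 0
      induction n with
      | zero =>
        rcases lt_max_iff.1 (show 0 < max (M 0 p) (S 1 p) from hn) with h | h
        · rw [hM0] at h; exact absurd h (lt_irrefl 0)
        · exact ⟨0, h⟩
      | succ n ih =>
        rcases lt_max_iff.1 (show 0 < max (M (n + 1) p) (S (n + 1 + 1) p) from hn) with h | h
        · exact ih h
        · exact ⟨n + 1, h⟩
    · rintro ⟨n, hn⟩
      exact ⟨n, lt_max_of_lt_right hn⟩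
  rw [← hunion]
  have := tendsto_setIntegral_of_monotone hEmeas hEmono (hgint.integrableOn)
  exact ge_of_tendsto this (Eventually.of_forall hstep)

theorem stmt_7 {X : Type*} [MeasurableSpace X] (μ : Measure X) [IsProbabilityMeasure μ]
    (F : X → X) (hF : MeasurePreserving F μ μ) (V : Set X) (hV : MeasurableSet V) :
    μ ((⋃ k : ℕ, F^[k] ⁻¹' V) ∩
        {p : X |
          Filter.liminf
            (fun N : ℕ =>
              (1 / (N : ℝ)) *
                ∑ k ∈ Finset.range (N + 1), V.indicator (fun _ => (1 : ℝ)) (F^[k] p))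
            atTop = 0}) = 0 := by
  set ind : X → ℝ := V.indicator (fun _ => (1 : ℝ)) with hind
  set a : X → ℕ → ℝ := fun p N =>
    (1 / (N : ℝ)) * ∑ k ∈ Finset.range (N + 1), ind (F^[k] p) with ha
  set Z : Set X := {p | Filter.liminf (a p) atTop = 0} with hZ
  have hind0 : ∀ x, 0 ≤ ind x := fun x => by
    by_cases h : x ∈ V <;> simp [hind, h]
  have hind1 : ∀ x, ind x ≤ 1 := fun x => by
    by_cases h : x ∈ V <;> simp [hind, h]
  have hindm : Measurable ind := measurable_const.indicator hV
  have ha0 : ∀ p N, 0 ≤ a p N := fun p N =>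
    mul_nonneg (by positivity) (Finset.sum_nonneg fun k _ => hind0 _)
  have hsum_le : ∀ p (m : ℕ), ∑ k ∈ Finset.range m, ind (F^[k] p) ≤ (m : ℝ) := by
    intro p m
    calc ∑ k ∈ Finset.range m, ind (F^[k] p) ≤ ∑ k ∈ Finset.range m, (1 : ℝ) :=
      Finset.sum_le_sum fun k _ => hind1 _
    _ = m := by simp
  have haub : ∀ p N, a p N ≤ 2 := by
    intro p N
    rcases Nat.eq_zero_or_pos N with rfl | hN
    · simp [ha]
    have hNpos : (0 : ℝ) < N := by exact_mod_cast hN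
    calc a p N ≤ (1 / (N : ℝ)) * ((N : ℝ) + 1) := by
          refine mul_le_mul_of_nonneg_left ?_ (by positivity)
          simpa using hsum_le p (N + 1)
    _ ≤ 2 := by
          rw [one_div_mul_eq_div, div_le_iff₀ hNpos]
          have : (1 : ℝ) ≤ N := by exact_mod_cast hN
          linarith
  -- measurability of a and Z
  have ham : ∀ N, Measurable fun p => a p N := fun N =>
    measurable_const.mul (Finset.measurable_sum _ fun k _ =>
      hindm.comp (hF.measurable.iterate k))
  have hZm : MeasurableSet Z := by
    have : Measurable fun p => Filter.liminf (a p) atTop :=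
      Measurable.liminf fun N => ham N
    exact this (measurableSet_singleton 0)
  -- key inequality for invariance
  have hkey : ∀ p (N : ℕ), 1 ≤ N → a (F p) N ≤ 2 * a p (N + 1) := by
    intro p N hN
    have hNpos : (0 : ℝ) < N := by exact_mod_cast hN
    have hsum : ∑ k ∈ Finset.range (N + 1), ind (F^[k] (F p)) ≤
        ∑ k ∈ Finset.range (N + 2), ind (F^[k] p) := by
      rw [Finset.sum_range_succ' (fun k => ind (F^[k] p)) (N + 1)]
      simp only [Function.iterate_succ_apply, Function.iterate_zero_apply]
      exact le_add_of_nonneg_right (hind0 p)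
    calc a (F p) N ≤ (1 / (N : ℝ)) * ∑ k ∈ Finset.range (N + 2), ind (F^[k] p) :=
          mul_le_mul_of_nonneg_left hsum (by positivity)
    _ = (((N : ℝ) + 1) / N) * a p (N + 1) := by
          rw [ha]
          have h1 : ((N : ℝ) + 1) ≠ 0 := by positivity
          push_cast
          field_simp
    _ ≤ 2 * a p (N + 1) := by
          refine mul_le_mul_of_nonneg_right ?_ (ha0 p (N + 1))
          rw [div_le_iff₀ hNpos]
          have : (1 : ℝ) ≤ N := by exact_mod_cast hN
          linarith
  -- Z is invariant
  have hZinv : ∀ p, p ∈ Z → F p ∈ Z := by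
    intro p hp
    have hbddFp : IsBoundedUnder (· ≥ ·) atTop (a (F p)) :=
      isBoundedUnder_of ⟨0, fun N => ha0 (F p) N⟩
    have hcobddFp : IsCoboundedUnder (· ≥ ·) atTop (a (F p)) :=
      (isBoundedUnder_of ⟨2, fun N => haub (F p) N⟩ :
        IsBoundedUnder (· ≤ ·) atTop (a (F p))).isCoboundedUnder_ge
    have hcobddp : IsCoboundedUnder (· ≥ ·) atTop (a p) :=
      (isBoundedUnder_of ⟨2, fun N => haub p N⟩ :
        IsBoundedUnder (· ≤ ·) atTop (a p)).isCoboundedUnder_ge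
    have hple : ∀ ε : ℝ, 0 < ε → Filter.liminf (a (F p)) atTop ≤ ε := by
      intro ε hε
      have hfr : ∃ᶠ M in atTop, a p M < ε / 4 := by
        refine frequently_lt_of_liminf_lt hcobddp ?_
        rw [show Filter.liminf (a p) atTop = 0 from hp]
        positivity
      refine liminf_le_of_frequently_le ?_ hbddFp
      rw [frequently_atTop] at hfr ⊢
      intro b
      obtain ⟨M, hMb, hMlt⟩ := hfr (b + 2)
      refine ⟨M - 1, by omega, ?_⟩
      have h1 : (1 : ℕ) ≤ M - 1 := by omega
      have h2 : M - 1 + 1 = M := by omega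
      calc a (F p) (M - 1) ≤ 2 * a p (M - 1 + 1) := hkey p (M - 1) h1
      _ = 2 * a p M := by rw [h2]
      _ ≤ ε := by linarith
    have hge : 0 ≤ Filter.liminf (a (F p)) atTop :=
      le_liminf_of_le hcobddFp (Eventually.of_forall fun N => ha0 (F p) N)
    have hle : Filter.liminf (a (F p)) atTop ≤ 0 := by
      by_contra hcon
      push_neg at hcon
      have := hple (Filter.liminf (a (F p)) atTop / 2) (by linarith)
      linarith
    exact le_antisymm hle hge
  have hZiter : ∀ (k : ℕ) p, p ∈ Z → F^[k] p ∈ Z := by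
    intro k
    induction k with
    | zero => exact fun p hp => hp
    | succ k ih =>
      intro p hp
      rw [Function.iterate_succ_apply']
      exact hZinv _ (ih p hp)
  -- the set A = V ∩ Z is null
  set A : Set X := V ∩ Z with hA
  have hAm : MeasurableSet A := hV.inter hZm
  set indA : X → ℝ := A.indicator (fun _ => (1 : ℝ)) with hindA
  have hindA0 : ∀ x, 0 ≤ indA x := fun x => by
    by_cases h : x ∈ A <;> simp [hindA, h]
  have hindAle : ∀ x, indA x ≤ ind x := by
    intro x
    by_cases h : x ∈ A
    · simp [hindA, hind, h, h.1]
    · simpa [hindA, h] using hind0 x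
  have hindA1 : ∀ x, indA x ≤ 1 := fun x => (hindAle x).trans (hind1 x)
  have hindAm : Measurable indA := measurable_const.indicator hAm
  have hμA : μ A = 0 := by
    have htoReal : ∀ ε : ℝ, 0 < ε → (μ A).toReal ≤ ε := by
      intro ε hε
      set g : X → ℝ := fun p => ε - indA p with hg
      have hgm : Measurable g := measurable_const.sub hindAm
      have hgb : ∀ x, |g x| ≤ ε + 1 := by
        intro x
        rw [abs_le]
        constructor
        · have := hindA1 x; simp only [hg]; linarith
        · have := hindA0 x; simp only [hg]; linarith
      set E : Set X := {p : X | ∃ n : ℕ, 0 < ∑ k ∈ Finset.range (n + 1), g (F^[k] p)}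
        with hE
      have hEm : MeasurableSet E := by
        have : E = ⋃ n : ℕ, {p : X | 0 < ∑ k ∈ Finset.range (n + 1), g (F^[k] p)} := by
          ext p; simp [hE]
        rw [this]
        exact MeasurableSet.iUnion fun n => measurableSet_lt measurable_const
          (Finset.measurable_sum _ fun k _ => hgm.comp (hF.measurable.iterate k))
      have hmax : 0 ≤ ∫ x in E, g x ∂μ :=
        maximal_erg μ F hF g hgm (ε + 1) (by linarith) hgb
      -- A ⊆ E
      have hAE : A ⊆ E := by
        intro p hp
        have hpZ : Filter.liminf (a p) atTop = 0 := hp.2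
        have hcobddp : IsCoboundedUnder (· ≥ ·) atTop (a p) :=
          (isBoundedUnder_of ⟨2, fun N => haub p N⟩ :
            IsBoundedUnder (· ≤ ·) atTop (a p)).isCoboundedUnder_ge
        have hfr : ∃ᶠ N in atTop, a p N < ε :=
          frequently_lt_of_liminf_lt hcobddp (by rw [hpZ]; exact hε)
        obtain ⟨N, hN1, hNlt⟩ := (frequently_atTop.1 hfr) 1
        have hNpos : (0 : ℝ) < N := by exact_mod_cast hN1
        -- sum of ind over range (N+1) < ε * N
        have hsumV : ∑ k ∈ Finset.range (N + 1), ind (F^[k] p) < ε * N := by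
          have := hNlt
          rw [ha] at this
          simp only at this
          rw [one_div_mul_eq_div, div_lt_iff₀ hNpos] at this
          exact this
        have hsumA : ∑ k ∈ Finset.range (N + 1), indA (F^[k] p) < ε * N :=
          lt_of_le_of_lt (Finset.sum_le_sum fun k _ => hindAle _) hsumV
        refine ⟨N, ?_⟩
        have hsg : ∑ k ∈ Finset.range (N + 1), g (F^[k] p) =
            ((N : ℝ) + 1) * ε - ∑ k ∈ Finset.range (N + 1), indA (F^[k] p) := by
          rw [hg, Finset.sum_sub_distrib]
          simp [Finset.card_range]
          try ring
        rw [hsg]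
        have : ε * N < ((N : ℝ) + 1) * ε := by nlinarith
        linarith
      -- compute the integral
      have hintconst : IntegrableOn (fun _ : X => ε) E μ := integrableOn_const (ne_of_lt
        (lt_of_le_of_lt (measure_mono (Set.subset_univ E)) (by simp [lt_top_iff_ne_top])))
      have hintA : Integrable indA μ :=
        (integrable_const (1 : ℝ)).mono' hindAm.aestronglyMeasurable
          (ae_of_all _ fun x => by
            rw [Real.norm_eq_abs, abs_of_nonneg (hindA0 x)]; exact hindA1 x)
      have hInt1 : ∫ x in E, g x ∂μ =
          ε * (μ E).toReal - (μ (E ∩ A)).toReal := by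
        rw [hg]
        rw [integral_sub hintconst hintA.integrableOn]
        rw [setIntegral_const]
        rw [hindA, setIntegral_indicator hAm]
        simp [mul_comm]
        rfl
      have hEA : μ (E ∩ A) = μ A := by
        refine le_antisymm (measure_mono Set.inter_subset_right) ?_
        exact measure_mono fun p hp => ⟨hAE hp, hp⟩
      have hE1 : (μ E).toReal ≤ 1 := by
        have := prob_le_one (μ := μ) (s := E)
        simpa using ENNReal.toReal_mono (by simp) this
      have : 0 ≤ ε * (μ E).toReal - (μ A).toReal := by
        rw [← hEA]; rw [hInt1] at hmax; exact hmax
      nlinarith [ENNReal.toReal_nonneg (a := μ E)]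
    have h0 : (μ A).toReal ≤ 0 := by
      by_contra hcon
      push_neg at hcon
      have := htoReal ((μ A).toReal / 2) (by linarith)
      linarith
    have := le_antisymm h0 ENNReal.toReal_nonneg
    rw [ENNReal.toReal_eq_zero_iff] at this
    rcases this with h | h
    · exact h
    · exact absurd h (measure_ne_top μ A)
  -- conclude
  have hsub : (⋃ k : ℕ, F^[k] ⁻¹' V) ∩ Z ⊆ ⋃ k : ℕ, F^[k] ⁻¹' A := by
    rintro p ⟨hpP, hpZ⟩
    obtain ⟨k, hk⟩ := Set.mem_iUnion.1 hpP
    exact Set.mem_iUnion.2 ⟨k, ⟨hk, hZiter k p hpZ⟩⟩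
  refine measure_mono_null hsub (measure_iUnion_null fun k => ?_)
  rw [(hF.iterate k).measure_preimage hAm.nullMeasurableSet]
  exact hμA
end

section
/- Identify T*S^n with {(x,v) ∈ R^{n+1} × R^{n+1} : |x| = 1, ⟨x,v⟩ = 0}. For θ ∈ S^{n-1} ⊂ R^n × {0}, define the rotation map R_θ on T*γ = {(y₁,0,…,0,y_{n+1}; v₁,0,…,0,v_{n+1})} by R_θ(y₁,0,…,0,y_{n+1}; v₁,0,…,0,v_{n+1}) = (y_{n+1}·n + y₁·x_θ ; v_{n+1}·n + v₁·x_θ), where n = (0,…,0,1) and x_θ = (θ,0). Then for any smooth embedded curve c: [0,1] → T*γ, the set L_c = ⋃_{θ∈S^{n-1}} R_θ(c([0,1])) satisfies: the restriction of the canonical symplectic form ω = Σᵢ dyᵢ ∧ dvᵢ to L_c (away from the poles (±n, 0)) vanishes. -/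
open Finset

/-- the canonical symplectic form `ω = Σᵢ dyᵢ ∧ dvᵢ` of `ℝ^{2n+2}` vanishes
on pairs of tangent vectors to `L_c = ⋃_θ R_θ(c([0,1]))`, away from the poles `(±n, 0)`.
We identify `ℝ^{n+1} ≅ (Fin n → ℝ) × ℝ`, so that the rotated surface is parametrized by
`Φ(t, θ) = ((y₁ t) • θ, y_{n+1} t ; (v₁ t) • θ, v_{n+1} t)` for `θ ∈ S^{n-1}`, where
`c(t) = (y₁ t, y_{n+1} t; v₁ t, v_{n+1} t)` is a smooth embedded curve in
`T*γ ⊆ T*S^n`.  Tangent vectors to `L_c` at `Φ(t,θ)` are the images under `DΦ` of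
`(s, ξ)` with `ξ` tangent to the sphere at `θ`, i.e. `⟨θ, ξ⟩ = 0`. -/
theorem stmt_10 (n : ℕ) (y₁ yn v₁ vn y₁' yn' v₁' vn' : ℝ → ℝ)
    (hy₁ : ∀ t, HasDerivAt y₁ (y₁' t) t) (hyn : ∀ t, HasDerivAt yn (yn' t) t)
    (hv₁ : ∀ t, HasDerivAt v₁ (v₁' t) t) (hvn : ∀ t, HasDerivAt vn (vn' t) t)
    -- the curve c lies in T*S^n (in fact in T*γ): |y| = 1 and ⟨y, v⟩ = 0
    (hsph : ∀ t, (y₁ t) ^ 2 + (yn t) ^ 2 = 1)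
    (horth : ∀ t, y₁ t * v₁ t + yn t * vn t = 0)
    (t : ℝ) (ht : t ∈ Set.Icc (0 : ℝ) 1)
    -- away from the poles (±n, 0)
    (hpole : ¬(y₁ t = 0 ∧ v₁ t = 0 ∧ vn t = 0))
    (θ ξ₁ ξ₂ : Fin n → ℝ) (hθ : ∑ i, θ i ^ 2 = 1)
    (htan₁ : ∑ i, θ i * ξ₁ i = 0) (htan₂ : ∑ i, θ i * ξ₂ i = 0) (s₁ s₂ : ℝ) :
    -- ω(DΦ(s₁,ξ₁), DΦ(s₂,ξ₂)) = 0, where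
    -- DΦ(s,ξ) = (s·y₁'·θ + y₁·ξ, s·yn' ; s·v₁'·θ + v₁·ξ, s·vn')
    ((∑ i, (s₁ * y₁' t * θ i + y₁ t * ξ₁ i) * (s₂ * v₁' t * θ i + v₁ t * ξ₂ i))
        + (s₁ * yn' t) * (s₂ * vn' t))
      - ((∑ i, (s₂ * y₁' t * θ i + y₁ t * ξ₂ i) * (s₁ * v₁' t * θ i + v₁ t * ξ₁ i))
        + (s₂ * yn' t) * (s₁ * vn' t)) = 0 := by
  have e1 : ∀ (a b c d : ℝ),
      (∑ i, (a * θ i + b * ξ₁ i) * (c * θ i + d * ξ₂ i))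
        = a * c + b * d * ∑ i, ξ₁ i * ξ₂ i := by
    intro a b c d
    have : ∀ i ∈ Finset.univ, (a * θ i + b * ξ₁ i) * (c * θ i + d * ξ₂ i)
        = a * c * (θ i ^ 2) + a * d * (θ i * ξ₂ i) + b * c * (θ i * ξ₁ i)
          + b * d * (ξ₁ i * ξ₂ i) := by intro i _; ring
    rw [Finset.sum_congr rfl this]
    simp only [Finset.sum_add_distrib, ← Finset.mul_sum, hθ, htan₁, htan₂]
    ring
  have e2 : ∀ (a b c d : ℝ),
      (∑ i, (a * θ i + b * ξ₂ i) * (c * θ i + d * ξ₁ i))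
        = a * c + b * d * ∑ i, ξ₁ i * ξ₂ i := by
    intro a b c d
    have : ∀ i ∈ Finset.univ, (a * θ i + b * ξ₂ i) * (c * θ i + d * ξ₁ i)
        = a * c * (θ i ^ 2) + a * d * (θ i * ξ₁ i) + b * c * (θ i * ξ₂ i)
          + b * d * (ξ₁ i * ξ₂ i) := by intro i _; ring
    rw [Finset.sum_congr rfl this]
    simp only [Finset.sum_add_distrib, ← Finset.mul_sum, hθ, htan₁, htan₂]
    ring
  rw [e1, e2]
  ring
end
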